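/- Assume φ ∈ (0,1), ω > 0, μ > 0, b > 0 and r := bφ − μ(1−φ) > 0; set ρ* := (1 − e^{μ(1−φ)ω − bφω})/(1 − e^{−bφω}). Let A = (a_{ij}) be a real 3×3 matrix and suppose u : ℝ → ℝ³ satisfies the Lotka–Volterra competition system at every t ∈ ℝ, is T-periodic for some T > 0, has all components strictly positive, and suppose (r ω)/(b T) is irrational. Then for every s ∈ ℝ there exists a continuous v : [0, ∞) → ℝ³ with v(0) = ρ*·u(s) such that, for every natural number k, each component of v has derivative −μ·v_i(t) at every t ∈ (kω, kω + (1−φ)ω) and v satisfies the Lotka–Volterra competition system at every t ∈ (kω + (1−φ)ω, (k+1)ω); moreover v(kω) = ρ*·u(s + k·(r/b)ω) for all k ∈ ℕ, and the set {v(kω) : k ∈ ℕ} is dense in ρ*·(range of u). (This produces quasi-periodic positive solutions of the seasonal system.) -/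

import Mathlib

open Set


lemma lv_dense_aux (α T : ℝ) (hT : 0 < T) (hirr : Irrational (α / T)) (x : ℝ)
    {ε : ℝ} (hε : 0 < ε) : ∃ (k : ℕ) (n : ℤ), |((k : ℝ) * α + (n : ℝ) * T) - x| < ε := by
  obtain ⟨N, hN⟩ := exists_nat_gt (T / ε)
  have hN0 : 0 < N := by
    have h0 : (0:ℝ) < T / ε := div_pos hT hε
    have : (0:ℝ) < (N:ℝ) := h0.trans hN
    exact_mod_cast this
  obtain ⟨j, k0, hk0pos, hk0le, hjk⟩ := Real.exists_int_int_abs_mul_sub_le (α / T) hN0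
  set δ : ℝ := (k0 : ℝ) * α - (j : ℝ) * T with hδdef
  have hTne : T ≠ 0 := hT.ne'
  have hδeq : δ = T * ((k0 : ℝ) * (α / T) - j) := by field_simp [hδdef]; ring
  have hδne : δ ≠ 0 := by
    intro h
    rw [hδeq] at h
    have h2 : (k0 : ℝ) * (α / T) - j = 0 := by
      rcases mul_eq_zero.1 h with h | h
      · exact absurd h hTne
      · exact h
    have hk0ne : (k0 : ℝ) ≠ 0 := by exact_mod_cast hk0pos.ne'
    have : (α / T) = (j : ℝ) / (k0 : ℝ) := by field_simp at h2 ⊢; linarith [h2]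
    exact hirr ⟨(j : ℚ) / (k0 : ℚ), by push_cast; rw [this]⟩
  have hδlt : |δ| < ε := by
    rw [hδeq, abs_mul, abs_of_pos hT]
    calc T * |(k0:ℝ) * (α/T) - j| ≤ T * (1 / (N + 1)) := by
          exact mul_le_mul_of_nonneg_left hjk hT.le
      _ < ε := by
          rw [mul_one_div, div_lt_iff₀ (by positivity)]
          have : T / ε < N + 1 := hN.trans (by linarith)
          calc T = (T / ε) * ε := by field_simp
            _ < (N+1) * ε := by
                apply mul_lt_mul_of_pos_right this hε
            _ = ε * (N+1) := by ring
  have hδltT : |δ| < T := by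
    rw [hδeq, abs_mul, abs_of_pos hT]
    have h1 : |(k0:ℝ) * (α/T) - j| < 1 := lt_of_le_of_lt hjk (by
      rw [div_lt_one (by positivity)]
      have : (1:ℝ) ≤ N := by exact_mod_cast hN0
      linarith)
    nlinarith [hT]
  rcases lt_or_gt_of_ne hδne with hneg | hpos
  · -- δ < 0
    obtain ⟨P, hP⟩ := exists_nat_ge (x / T)
    set x' : ℝ := x - (P : ℝ) * T with hx'
    have hx'le : x' ≤ 0 := by
      have : x ≤ (P:ℝ) * T := by
        rw [div_le_iff₀ hT] at hP; linarith
      linarith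
    have hq : 0 ≤ x' / δ := by rw [div_nonneg_iff]; right; exact ⟨hx'le, hneg.le⟩
    set m : ℕ := ⌊x' / δ⌋.toNat with hm
    have hmcast : (m : ℝ) = ((⌊x' / δ⌋ : ℤ) : ℝ) := by
      rw [hm]; exact_mod_cast congrArg (fun z : ℤ => (z : ℝ)) (Int.toNat_of_nonneg (Int.floor_nonneg.2 hq))
    have hmle : (m : ℝ) ≤ x' / δ := by rw [hmcast]; exact Int.floor_le _
    have hmgt : x' / δ < (m : ℝ) + 1 := by rw [hmcast]; exact Int.lt_floor_add_one _
    have h1 : (m : ℝ) * δ ≥ x' := by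
      have := mul_le_mul_of_nonpos_right hmle hneg.le
      rwa [div_mul_cancel₀ _ hδne] at this
    have h2 : (m : ℝ) * δ < x' - δ := by
      have := mul_lt_mul_of_neg_right hmgt hneg
      rw [div_mul_cancel₀ _ hδne] at this
      linarith [this]
    refine ⟨m * k0.toNat, (P : ℤ) - (m : ℤ) * j, ?_⟩
    have hk0t : ((k0.toNat : ℕ) : ℝ) = (k0 : ℝ) := by
      exact_mod_cast congrArg (fun z : ℤ => (z : ℝ)) (Int.toNat_of_nonneg hk0pos.le)
    have hcast : ((m * k0.toNat : ℕ) : ℝ) = (m : ℝ) * (k0 : ℝ) := by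
      push_cast; rw [hk0t]
    rw [hcast]
    have : (m:ℝ) * (k0:ℝ) * α + (((P:ℤ) - (m:ℤ)*j : ℤ) : ℝ) * T - x = (m:ℝ) * δ - x' := by
      push_cast; rw [hδdef, hx']; ring
    rw [this, abs_sub_comm]
    rw [abs_of_neg hneg] at hδlt
    rw [abs_of_nonpos (by linarith)]
    linarith
  · -- δ > 0
    obtain ⟨P, hP⟩ := exists_nat_ge (-(x / δ))
    set x' : ℝ := x + (P : ℝ) * T with hx'
    have hq : 0 ≤ x' / δ := by
      have hTδ : (1:ℝ) ≤ T / δ := by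
        rw [le_div_iff₀ hpos]
        rw [abs_of_pos hpos] at hδltT; linarith
      have hxe : x' / δ = x / δ + (P:ℝ) * (T / δ) := by
        rw [hx', add_div, mul_div_assoc]
      rw [hxe]
      have h2 : (P:ℝ) ≤ (P:ℝ) * (T/δ) := le_mul_of_one_le_right (Nat.cast_nonneg P) hTδ
      linarith
    set m : ℕ := ⌊x' / δ⌋.toNat with hm
    have hmcast : (m : ℝ) = ((⌊x' / δ⌋ : ℤ) : ℝ) := by
      rw [hm]; exact_mod_cast congrArg (fun z : ℤ => (z : ℝ)) (Int.toNat_of_nonneg (Int.floor_nonneg.2 hq))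
    have hmle : (m : ℝ) ≤ x' / δ := by rw [hmcast]; exact Int.floor_le _
    have hmgt : x' / δ < (m : ℝ) + 1 := by rw [hmcast]; exact Int.lt_floor_add_one _
    have h1 : (m : ℝ) * δ ≤ x' := by
      have := mul_le_mul_of_nonneg_right hmle hpos.le
      rwa [div_mul_cancel₀ _ hδne] at this
    have h2 : x' < (m : ℝ) * δ + δ := by
      have := mul_lt_mul_of_pos_right hmgt hpos
      rw [div_mul_cancel₀ _ hδne] at this
      linarith
    refine ⟨m * k0.toNat, -(P : ℤ) - (m : ℤ) * j, ?_⟩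
    have hk0t : ((k0.toNat : ℕ) : ℝ) = (k0 : ℝ) := by
      exact_mod_cast congrArg (fun z : ℤ => (z : ℝ)) (Int.toNat_of_nonneg hk0pos.le)
    have hcast : ((m * k0.toNat : ℕ) : ℝ) = (m : ℝ) * (k0 : ℝ) := by
      push_cast; rw [hk0t]
    rw [hcast]
    have : (m:ℝ) * (k0:ℝ) * α + ((-(P:ℤ) - (m:ℤ)*j : ℤ) : ℝ) * T - x = (m:ℝ) * δ - x' := by
      push_cast; rw [hδdef, hx']; ring
    rw [this, abs_of_nonpos (by linarith)]
    rw [abs_of_pos hpos] at hδlt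
    linarith


lemma lv_fract_eq (ω t : ℝ) (hω : ω ≠ 0) : Int.fract (t / ω) * ω = t - (⌊t / ω⌋ : ℝ) * ω := by
  rw [Int.fract]; field_simp

lemma lv_coe_fract (ω t : ℝ) (hω : ω ≠ 0) :
    ((t : ℝ) : AddCircle ω) = ((Int.fract (t / ω) * ω : ℝ) : AddCircle ω) := by
  have ht : Int.fract (t / ω) * ω = t - (⌊t / ω⌋ : ℤ) • ω := by
    rw [Int.fract, zsmul_eq_mul]; field_simp
  have hz : ((((⌊t / ω⌋ : ℤ) • ω : ℝ)) : AddCircle ω) = 0 :=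
    (QuotientAddGroup.eq_zero_iff _).2 (AddSubgroup.zsmul_mem_zmultiples ω _)
  rw [ht, AddCircle.coe_sub, hz, sub_zero]

lemma lv_periodic_comp_cont {f : ℝ → ℝ} {ω : ℝ} (hω : 0 < ω)
    (hf : ContinuousOn f (Set.Icc 0 ω)) (hend : f 0 = f ω) :
    Continuous fun t => f (Int.fract (t / ω) * ω) := by
  haveI : Fact (0 < ω) := ⟨hω⟩
  have hcont : Continuous (AddCircle.liftIco ω 0 f) :=
    AddCircle.liftIco_zero_continuous hend (by simpa using hf)
  have key : ∀ t : ℝ, f (Int.fract (t / ω) * ω) =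
      AddCircle.liftIco ω 0 f ((t : AddCircle ω)) := by
    intro t
    have hmem : Int.fract (t / ω) * ω ∈ Ico (0:ℝ) ω := by
      constructor
      · exact mul_nonneg (Int.fract_nonneg _) hω.le
      · have h1 := Int.fract_lt_one (t / ω)
        calc Int.fract (t / ω) * ω < 1 * ω := mul_lt_mul_of_pos_right h1 hω
          _ = ω := one_mul ω
    rw [lv_coe_fract ω t hω.ne', AddCircle.liftIco_zero_coe_apply hmem]
  simp_rw [key]
  exact hcont.comp (AddCircle.continuous_mk' ω)


lemma lv_algebra (b c0 Ee F U S : ℝ) (hEF : Ee * F = 1)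
    (hD : c0 + (1 - c0) * Ee ≠ 0) (hb : b ≠ 0) :
    c0 / (c0 + (1 - c0) * Ee) * U * (b - c0 / (c0 + (1 - c0) * Ee) * S) =
      (0 * (c0 + (1 - c0) * Ee) - c0 * ((1 - c0) * (Ee * (-b)))) / (c0 + (1 - c0) * Ee) ^ 2 * U +
      c0 / (c0 + (1 - c0) * Ee) * (U * (b - S) * (b⁻¹ * (c0 * (F * b) / (c0 * F + (1 - c0))))) := by
  have hF : F ≠ 0 := by intro h; rw [h, mul_zero] at hEF; exact one_ne_zero hEF.symm
  have hA : c0 * F + (1 - c0) = F * (c0 + (1 - c0) * Ee) := by linear_combination (c0 - 1) * hEF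
  rw [hA]
  field_simp
  ring

set_option maxHeartbeats 1000000 in
/-- Quasi-periodic positive solutions of the seasonal system. If the
autonomous Lotka–Volterra system has a positive `T`-periodic solution `u` and
`(rω)/(bT)` is irrational, then through each point `ρ* • u s` there is a solution `v` of
the seasonal system (death phase on each `(kω, kω + (1-φ)ω)`, Lotka–Volterra phase on
each `(kω + (1-φ)ω, (k+1)ω)`) with `v (kω) = ρ* • u (s + k (r/b) ω)` for all `k ∈ ℕ`,
and the set `{v (kω) : k ∈ ℕ}` is dense in the scaled curve `ρ* • (range u)`. -/
theorem stmt_12 (φ ω μ b r ρs : ℝ)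
    (hφ0 : 0 < φ) (hφ1 : φ < 1) (hω : 0 < ω) (hμ : 0 < μ) (hb : 0 < b)
    (hr : r = b * φ - μ * (1 - φ)) (hrpos : 0 < r)
    (hρs : ρs = (1 - Real.exp (μ * (1 - φ) * ω - b * φ * ω)) /
      (1 - Real.exp (-(b * φ * ω))))
    (A : Matrix (Fin 3) (Fin 3) ℝ) (u : ℝ → Fin 3 → ℝ) (T : ℝ) (hT : 0 < T)
    (hu : ∀ t : ℝ, ∀ i : Fin 3,
      HasDerivAt (fun s => u s i) (u t i * (b - ∑ j : Fin 3, A i j * u t j)) t)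
    (hper : ∀ t : ℝ, u (t + T) = u t)
    (hpos : ∀ t : ℝ, ∀ i : Fin 3, 0 < u t i)
    (hirr : Irrational (r * ω / (b * T))) :
    ∀ s : ℝ, ∃ v : ℝ → Fin 3 → ℝ,
      ContinuousOn v (Set.Ici 0) ∧
      (∀ i : Fin 3, v 0 i = ρs * u s i) ∧
      (∀ k : ℕ, ∀ t ∈ Set.Ioo ((k : ℝ) * ω) ((k : ℝ) * ω + (1 - φ) * ω), ∀ i : Fin 3,
        HasDerivAt (fun τ => v τ i) (-μ * v t i) t) ∧
      (∀ k : ℕ, ∀ t ∈ Set.Ioo ((k : ℝ) * ω + (1 - φ) * ω) (((k : ℝ) + 1) * ω), ∀ i : Fin 3,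
        HasDerivAt (fun τ => v τ i) (v t i * (b - ∑ j : Fin 3, A i j * v t j)) t) ∧
      (∀ k : ℕ, ∀ i : Fin 3, v ((k : ℝ) * ω) i = ρs * u (s + (k : ℝ) * (r / b * ω)) i) ∧
      (∀ t : ℝ, (fun i : Fin 3 => ρs * u t i) ∈
        closure (Set.range fun k : ℕ => v ((k : ℝ) * ω))) := by
  intro s
  ----------------------------------------------------------------
  -- preliminaries
  ----------------------------------------------------------------
  set B : ℝ := (1 - φ) * ω with hBdef
  have hB0 : 0 < B := by rw [hBdef]; nlinarith
  have hBω : B < ω := by rw [hBdef]; nlinarith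
  set l : ℝ := Real.exp (-(μ * B)) with hl
  set E : ℝ := Real.exp (-(b * (φ * ω))) with hE
  have hl0 : 0 < l := Real.exp_pos _
  have hl1 : l < 1 := by rw [hl, Real.exp_lt_one_iff]; nlinarith
  have hE0 : 0 < E := Real.exp_pos _
  have hE1 : E < 1 := by rw [hE, Real.exp_lt_one_iff]; nlinarith
  have hρ0 : 0 < ρs := by
    rw [hρs]
    apply div_pos
    · have h4 : μ * (1 - φ) * ω - b * φ * ω = -(r * ω) := by rw [hr]; ring
      rw [h4]
      have : Real.exp (-(r * ω)) < 1 := by rw [Real.exp_lt_one_iff]; nlinarith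
      linarith
    · have : Real.exp (-(b * φ * ω)) < 1 := by rw [Real.exp_lt_one_iff]; nlinarith
      linarith
  set c0 : ℝ := l * ρs with hc0def
  have hc00 : 0 < c0 := mul_pos hl0 hρ0
  have hexp : Real.exp (μ * (1 - φ) * ω - b * φ * ω) = E / l := by
    rw [hE, hl, eq_div_iff hl0.ne', ← Real.exp_add]
    congr 1; rw [hBdef]; ring
  have hEeq : Real.exp (-(b * φ * ω)) = E := by rw [hE]; congr 1; ring
  have key1 : l = c0 + (1 - c0) * E := by
    have h1 : ρs * (1 - E) = 1 - E / l := by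
      rw [hρs, hexp, hEeq, div_mul_cancel₀]
      intro h; rw [sub_eq_zero] at h; exact hE1.ne (by linarith [h])
    have h2 : l * (ρs * (1 - E)) = l - E := by
      rw [h1, mul_sub, mul_one, mul_div_cancel₀ _ hl0.ne']
    rw [hc0def]; nlinarith [h2]
  have hc01 : c0 < 1 := by nlinarith [key1]
  have hFE0 : Real.exp (b * (φ * ω)) * E = 1 := by
    rw [hE, ← Real.exp_add]; ring_nf; exact Real.exp_zero
  have key2 : c0 * Real.exp (b * (φ * ω)) + (1 - c0) = Real.exp (r * ω) := by
    have h3 : Real.exp (r * ω) = Real.exp (b * (φ * ω)) * l := by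
      rw [hl, ← Real.exp_add]; congr 1; rw [hBdef, hr]; ring
    rw [h3, key1]; nlinarith [hFE0]
  set α : ℝ := r / b * ω with hαdef
  have hden : ∀ x : ℝ, 0 < c0 + (1 - c0) * Real.exp (-(b * x)) := fun x => by
    have := Real.exp_pos (-(b * x)); nlinarith
  have hnum : ∀ x : ℝ, 0 < c0 * Real.exp (b * x) + (1 - c0) := fun x => by
    have := Real.exp_pos (b * x); nlinarith
  ----------------------------------------------------------------
  -- the building blocks of v
  ----------------------------------------------------------------
  set ρp : ℝ → ℝ := fun τ =>
    if τ ≤ B then ρs * Real.exp (-(μ * τ))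
    else c0 / (c0 + (1 - c0) * Real.exp (-(b * (τ - B)))) with hρpdef
  set θp : ℝ → ℝ := fun τ =>
    if τ ≤ B then 0
    else b⁻¹ * Real.log (c0 * Real.exp (b * (τ - B)) + (1 - c0)) with hθpdef
  set v : ℝ → Fin 3 → ℝ := fun t i =>
    ρp (Int.fract (t / ω) * ω) *
      u (s + (⌊t / ω⌋ : ℝ) * α + θp (Int.fract (t / ω) * ω)) i with hvdef
  -- endpoint values
  have hρp0 : ρp 0 = ρs := by
    rw [hρpdef]; simp only [if_pos hB0.le]
    norm_num
  have hρpω : ρp ω = ρs := by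
    rw [hρpdef]; simp only [if_neg (not_le.2 hBω)]
    have hωB : ω - B = φ * ω := by rw [hBdef]; ring
    rw [hωB, ← hE, ← key1, hc0def]
    field_simp
  have hθp0 : θp 0 = 0 := by rw [hθpdef]; simp only [if_pos hB0.le]
  have hθpω : θp ω = α := by
    rw [hθpdef]; simp only [if_neg (not_le.2 hBω)]
    have hωB : ω - B = φ * ω := by rw [hBdef]; ring
    rw [hωB, key2, Real.log_exp, hαdef]
    field_simp
  -- floor and fract in open periods
  have hfloor : ∀ (k : ℕ) {τ : ℝ}, (k : ℝ) * ω < τ → τ < ((k : ℝ) + 1) * ω →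
      ⌊τ / ω⌋ = (k : ℤ) := by
    intro k τ h1 h2
    rw [Int.floor_eq_iff]
    constructor
    · push_cast
      rw [le_div_iff₀ hω]; linarith
    · push_cast
      rw [div_lt_iff₀ hω]; linarith
  have hfract : ∀ (k : ℕ) {τ : ℝ}, (k : ℝ) * ω < τ → τ < ((k : ℝ) + 1) * ω →
      Int.fract (τ / ω) * ω = τ - (k : ℝ) * ω := by
    intro k τ h1 h2
    rw [Int.fract, hfloor k h1 h2]
    push_cast
    field_simp
  -- value at the grid points
  have hvk : ∀ (k : ℕ) (i : Fin 3), v ((k : ℝ) * ω) i = ρs * u (s + (k : ℝ) * α) i := by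
    intro k i
    have hdiv : ((k : ℝ) * ω) / ω = (k : ℝ) := mul_div_cancel_right₀ _ hω.ne'
    simp only [hvdef, hdiv, Int.fract_natCast, Int.floor_natCast, zero_mul,
      if_pos hB0.le, hρp0, hθp0]
    norm_num [Int.cast_natCast]
  ----------------------------------------------------------------
  -- continuity of v
  ----------------------------------------------------------------
  have hucont : ∀ i : Fin 3, Continuous fun t => u t i := fun i =>
    continuous_iff_continuousAt.2 fun t => (hu t i).continuousAt
  have hρpcont : Continuous ρp := by
    rw [hρpdef]
    apply Continuous.if_le
    · exact continuous_const.mul (Real.continuous_exp.comp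
        (continuous_const.mul continuous_id).neg)
    · apply Continuous.div continuous_const
      · exact continuous_const.add (continuous_const.mul (Real.continuous_exp.comp
          (continuous_const.mul (continuous_id.sub continuous_const)).neg))
      · intro x; exact (hden (x - B)).ne'
    · exact continuous_id
    · exact continuous_const
    · intro x hx
      subst hx
      simp only [sub_self, mul_zero, neg_zero, Real.exp_zero, mul_one]
      rw [show c0 + (1 - c0) = 1 by ring, div_one, hc0def, hl, mul_comm]
  have hθpcont : Continuous θp := by
    rw [hθpdef]
    apply Continuous.if_le
    · exact continuous_const
    · apply Continuous.mul continuous_const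
      apply Continuous.log
      · exact (continuous_const.mul (Real.continuous_exp.comp
          (continuous_const.mul (continuous_id.sub continuous_const)))).add continuous_const
      · intro x; exact (hnum (x - B)).ne'
    · exact continuous_id
    · exact continuous_const
    · intro x hx
      subst hx
      simp only [sub_self, mul_zero, Real.exp_zero, mul_one]
      rw [show c0 + (1 - c0) = 1 by ring, Real.log_one, mul_zero]
  have hPcont : Continuous fun t => ρp (Int.fract (t / ω) * ω) :=
    lv_periodic_comp_cont hω hρpcont.continuousOn (hρp0.trans hρpω.symm)
  have hηcont : Continuous fun τ => θp τ - α / ω * τ :=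
    hθpcont.sub (continuous_const.mul continuous_id)
  have hQcont : Continuous fun t => (θp (Int.fract (t / ω) * ω)
      - α / ω * (Int.fract (t / ω) * ω)) :=
    lv_periodic_comp_cont (f := fun τ => θp τ - α / ω * τ) hω hηcont.continuousOn
      (by show θp 0 - α / ω * 0 = θp ω - α / ω * ω
          rw [hθp0, hθpω]; field_simp; ring)
  have harg : ∀ t : ℝ, s + (⌊t / ω⌋ : ℝ) * α + θp (Int.fract (t / ω) * ω)
      = s + α / ω * t + (θp (Int.fract (t / ω) * ω) - α / ω * (Int.fract (t / ω) * ω)) := by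
    intro t
    have h := lv_fract_eq ω t hω.ne'
    rw [h]
    field_simp
    ring
  have hvcont : Continuous v := by
    rw [hvdef]
    apply continuous_pi
    intro i
    have : (fun t => ρp (Int.fract (t / ω) * ω) *
        u (s + (⌊t / ω⌋ : ℝ) * α + θp (Int.fract (t / ω) * ω)) i)
        = fun t => ρp (Int.fract (t / ω) * ω) *
        u (s + α / ω * t + (θp (Int.fract (t / ω) * ω) - α / ω * (Int.fract (t / ω) * ω))) i := by
      funext t; rw [harg t]
    rw [this]
    exact hPcont.mul ((hucont i).comp
      ((continuous_const.add (continuous_const.mul continuous_id)).add hQcont))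
  ----------------------------------------------------------------
  -- evaluation lemmas for the pieces
  ----------------------------------------------------------------
  have hρp_le : ∀ x : ℝ, x ≤ B → ρp x = ρs * Real.exp (-(μ * x)) := by
    intro x hx; simp only [hρpdef]; rw [if_pos hx]
  have hρp_gt : ∀ x : ℝ, ¬ x ≤ B → ρp x = c0 / (c0 + (1 - c0) * Real.exp (-(b * (x - B)))) := by
    intro x hx; simp only [hρpdef]; rw [if_neg hx]
  have hθp_le : ∀ x : ℝ, x ≤ B → θp x = 0 := by
    intro x hx; simp only [hθpdef]; rw [if_pos hx]
  have hθp_gt : ∀ x : ℝ, ¬ x ≤ B →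
      θp x = b⁻¹ * Real.log (c0 * Real.exp (b * (x - B)) + (1 - c0)) := by
    intro x hx; simp only [hθpdef]; rw [if_neg hx]
  have hv_eval : ∀ (t : ℝ) (i : Fin 3), v t i = ρp (Int.fract (t / ω) * ω) *
      u (s + (⌊t / ω⌋ : ℝ) * α + θp (Int.fract (t / ω) * ω)) i := fun _ _ => rfl
  ----------------------------------------------------------------
  -- conclusion
  ----------------------------------------------------------------
  refine ⟨v, hvcont.continuousOn, ?_, ?_, ?_, ?_, ?_⟩
  · -- initial value
    intro i
    have h := hvk 0 i
    norm_num at h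
    simpa using h
  · -- death phase
    intro k t ht i
    have hev : ∀ i' : Fin 3, (fun τ => v τ i') =ᶠ[nhds t]
        fun τ => ρs * Real.exp (-(μ * (τ - (k : ℝ) * ω))) * u (s + (k : ℝ) * α) i' := by
      intro i'
      filter_upwards [isOpen_Ioo.mem_nhds ht] with τ hτ
      have h1 : (k : ℝ) * ω < τ := hτ.1
      have h2 : τ < ((k : ℝ) + 1) * ω := by
        have := hτ.2; nlinarith [hBω]
      have hfr := hfract k h1 h2
      have hfl := hfloor k h1 h2
      have hle : τ - (k : ℝ) * ω ≤ B := by have := hτ.2; linarith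
      rw [hv_eval, hfr, hfl, hρp_le _ hle, hθp_le _ hle]
      norm_num [Int.cast_natCast]
    have hder : HasDerivAt
        (fun τ => ρs * Real.exp (-(μ * (τ - (k : ℝ) * ω))) * u (s + (k : ℝ) * α) i)
        (ρs * (Real.exp (-(μ * (t - (k : ℝ) * ω))) * (-μ)) * u (s + (k : ℝ) * α) i) t := by
      have h1 : HasDerivAt (fun τ : ℝ => -(μ * (τ - (k : ℝ) * ω))) (-μ) t := by
        have h := (((hasDerivAt_id t).sub_const ((k : ℝ) * ω)).const_mul μ).neg
        simp only [mul_one] at h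
        exact h
      exact (h1.exp.const_mul ρs).mul_const _
    have H := hder.congr_of_eventuallyEq (hev i)
    refine H.congr_deriv (Eq.symm ?_)
    rw [(hev i).eq_of_nhds]
    ring
  · -- Lotka-Volterra phase
    intro k t ht i
    have hev : ∀ i' : Fin 3, (fun τ => v τ i') =ᶠ[nhds t] fun τ =>
        c0 / (c0 + (1 - c0) * Real.exp (-(b * (τ - (k : ℝ) * ω - B)))) *
        u (s + (k : ℝ) * α +
          b⁻¹ * Real.log (c0 * Real.exp (b * (τ - (k : ℝ) * ω - B)) + (1 - c0))) i' := by
      intro i'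
      filter_upwards [isOpen_Ioo.mem_nhds ht] with τ hτ
      have h1 : (k : ℝ) * ω < τ := by have := hτ.1; nlinarith [hB0]
      have h2 : τ < ((k : ℝ) + 1) * ω := hτ.2
      have hfr := hfract k h1 h2
      have hfl := hfloor k h1 h2
      have hnle : ¬ (τ - (k : ℝ) * ω ≤ B) := by push_neg; have := hτ.1; linarith
      rw [hv_eval, hfr, hfl, hρp_gt _ hnle, hθp_gt _ hnle]
      norm_num [Int.cast_natCast]
    have hD0 := hden (t - (k : ℝ) * ω - B)
    have hA0 := hnum (t - (k : ℝ) * ω - B)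
    have hlin : HasDerivAt (fun τ : ℝ => τ - (k : ℝ) * ω - B) 1 t := by
      simpa using ((hasDerivAt_id t).sub_const ((k : ℝ) * ω)).sub_const B
    have hin1 : HasDerivAt (fun τ : ℝ => -(b * (τ - (k : ℝ) * ω - B))) (-b) t := by
      have h := (hlin.const_mul b).neg
      simp only [mul_one] at h
      exact h
    have hin2 : HasDerivAt (fun τ : ℝ => b * (τ - (k : ℝ) * ω - B)) b t := by
      simpa using hlin.const_mul b
    have hdenD : HasDerivAt
        (fun τ : ℝ => c0 + (1 - c0) * Real.exp (-(b * (τ - (k : ℝ) * ω - B))))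
        ((1 - c0) * (Real.exp (-(b * (t - (k : ℝ) * ω - B))) * (-b))) t :=
      (hin1.exp.const_mul (1 - c0)).const_add c0
    have hL : HasDerivAt
        (fun τ : ℝ => c0 / (c0 + (1 - c0) * Real.exp (-(b * (τ - (k : ℝ) * ω - B)))))
        ((0 * (c0 + (1 - c0) * Real.exp (-(b * (t - (k : ℝ) * ω - B))))
          - c0 * ((1 - c0) * (Real.exp (-(b * (t - (k : ℝ) * ω - B))) * (-b))))
          / (c0 + (1 - c0) * Real.exp (-(b * (t - (k : ℝ) * ω - B)))) ^ 2) t :=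
      (hasDerivAt_const t c0).div hdenD hD0.ne'
    have hnumD : HasDerivAt
        (fun τ : ℝ => c0 * Real.exp (b * (τ - (k : ℝ) * ω - B)) + (1 - c0))
        (c0 * (Real.exp (b * (t - (k : ℝ) * ω - B)) * b)) t :=
      (hin2.exp.const_mul c0).add_const (1 - c0)
    have hlog := hnumD.log hA0.ne'
    have hQ : HasDerivAt (fun τ : ℝ => s + (k : ℝ) * α +
        b⁻¹ * Real.log (c0 * Real.exp (b * (τ - (k : ℝ) * ω - B)) + (1 - c0)))
        (b⁻¹ * (c0 * (Real.exp (b * (t - (k : ℝ) * ω - B)) * b)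
          / (c0 * Real.exp (b * (t - (k : ℝ) * ω - B)) + (1 - c0)))) t :=
      (hlog.const_mul b⁻¹).const_add _
    have huc := (hu (s + (k : ℝ) * α +
      b⁻¹ * Real.log (c0 * Real.exp (b * (t - (k : ℝ) * ω - B)) + (1 - c0))) i).comp t hQ
    have hprod := hL.mul huc
    have H := hprod.congr_of_eventuallyEq (hev i)
    refine H.congr_deriv (Eq.symm ?_)
    have hvt : ∀ i' : Fin 3, v t i' =
        c0 / (c0 + (1 - c0) * Real.exp (-(b * (t - (k : ℝ) * ω - B)))) *
        u (s + (k : ℝ) * α +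
          b⁻¹ * Real.log (c0 * Real.exp (b * (t - (k : ℝ) * ω - B)) + (1 - c0))) i' :=
      fun i' => (hev i').eq_of_nhds
    have hsum : ∑ j : Fin 3, A i j * v t j =
        c0 / (c0 + (1 - c0) * Real.exp (-(b * (t - (k : ℝ) * ω - B)))) *
        ∑ j : Fin 3, A i j * u (s + (k : ℝ) * α +
          b⁻¹ * Real.log (c0 * Real.exp (b * (t - (k : ℝ) * ω - B)) + (1 - c0))) j := by
      rw [Finset.mul_sum]
      exact Finset.sum_congr rfl fun j _ => by rw [hvt j]; ring
    have hEF : Real.exp (-(b * (t - (k : ℝ) * ω - B))) *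
        Real.exp (b * (t - (k : ℝ) * ω - B)) = 1 := by
      rw [← Real.exp_add]; ring_nf; exact Real.exp_zero
    rw [hvt i, hsum]
    exact lv_algebra b c0 _ _ _ _ hEF hD0.ne' hb.ne'
  · -- values at grid points
    exact hvk
  · -- density
    intro t
    rw [Metric.mem_closure_iff]
    intro ε hε
    have hwc : Continuous fun τ : ℝ => (fun i : Fin 3 => ρs * u τ i) :=
      continuous_pi fun i => continuous_const.mul (hucont i)
    obtain ⟨δ, hδ0, hδ⟩ := Metric.continuousAt_iff.1 hwc.continuousAt ε hε
    have hαT : α / T = r * ω / (b * T) := by rw [hαdef]; field_simp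
    have hirr' : Irrational (α / T) := by rw [hαT]; exact hirr
    obtain ⟨k, n, hkn⟩ := lv_dense_aux α T hT hirr' (t - s) hδ0
    refine ⟨v ((k : ℝ) * ω), ⟨k, rfl⟩, ?_⟩
    have h1 : v ((k : ℝ) * ω) = fun i : Fin 3 => ρs * u (s + (k : ℝ) * α) i :=
      funext fun i => hvk k i
    have hperu : Function.Periodic u T := hper
    have h2 : u (s + (k : ℝ) * α + (n : ℝ) * T) = u (s + (k : ℝ) * α) := by
      simpa using (hperu.int_mul n) (s + (k : ℝ) * α)
    rw [h1, show (fun i : Fin 3 => ρs * u (s + (k : ℝ) * α) i)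
      = fun i : Fin 3 => ρs * u (s + (k : ℝ) * α + (n : ℝ) * T) i from by rw [h2]]
    have hdist : dist (s + (k : ℝ) * α + (n : ℝ) * T) t < δ := by
      rw [Real.dist_eq, show s + (k : ℝ) * α + (n : ℝ) * T - t
        = (k : ℝ) * α + (n : ℝ) * T - (t - s) from by ring]
      exact hkn
    rw [dist_comm]
    exact hδ hdist
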